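/- Let (ξᵢ) be i.i.d. real random variables with mean 0 and variance σ², and s, t ∈ [0,1]. For the deleting-item normalized sums W̃ₙ(s) and W̃ₙ(t) with deleted sets J_{k(⌊ns⌋)}, J_{k(⌊nt⌋)} of sizes with k(m)/m → 0, the covariance Cov(W̃ₙ(s), W̃ₙ(t)) converges to min(s, t) as n → ∞. -/

import Mathlib

open MeasureTheory ProbabilityTheory Filter Topology

/-- Convergence in distribution of real random variables to the law `ν`. -/
def ConvInDistrib {Ω : Type*} [MeasurableSpace Ω] (μ : Measure Ω)
    (X : ℕ → Ω → ℝ) (ν : Measure ℝ) : Prop :=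
  ∀ f : BoundedContinuousFunction ℝ ℝ,
    Tendsto (fun n => ∫ ω, f (X n ω) ∂μ) atTop (𝓝 (∫ x, f x ∂ν))

/-- Covariance of two real random variables. -/
noncomputable def cov {Ω : Type*} [MeasurableSpace Ω] (μ : Measure Ω) (X Y : Ω → ℝ) : ℝ :=
  ∫ ω, (X ω - ∫ ω', X ω' ∂μ) * (Y ω - ∫ ω', Y ω' ∂μ) ∂μ

section Aux

variable {Ω : Type*} [MeasurableSpace Ω] {μ : Measure Ω} [IsProbabilityMeasure μ]

lemma aux_integral_sum_mul_sum (ξ : ℕ → Ω → ℝ) (σ : ℝ)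
    (hindep : iIndepFun ξ μ)
    (hident : ∀ i, IdentDistrib (ξ i) (ξ 0) μ μ)
    (hL2 : MemLp (ξ 0) 2 μ)
    (hmean : ∫ ω, ξ 0 ω ∂μ = 0)
    (hvar : variance (ξ 0) μ = σ ^ 2)
    (A B : Finset ℕ) :
    ∫ ω, (∑ i ∈ A, ξ i ω) * (∑ j ∈ B, ξ j ω) ∂μ = (A ∩ B).card * σ ^ 2 := by
  have hL2i : ∀ i, MemLp (ξ i) 2 μ := fun i => (hident i).symm.memLp_snd hL2
  have hinti : ∀ i, Integrable (ξ i) μ := fun i => (hL2i i).integrable one_le_two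
  have hmuli : ∀ i j, Integrable (fun ω => ξ i ω * ξ j ω) μ := by
    intro i j
    have h := (hL2i j).smul (φ := ξ i) (hL2i i)
      (p := 2) (q := 2) (r := 1)
    rw [memLp_one_iff_integrable] at h
    exact h
  have hmeani : ∀ i, ∫ ω, ξ i ω ∂μ = 0 := fun i => (hident i).integral_eq.trans hmean
  have hsq : ∀ i, ∫ ω, ξ i ω * ξ i ω ∂μ = σ ^ 2 := by
    intro i
    have h2 := variance_eq_sub (hL2i i)
    rw [(hident i).variance_eq, hvar] at h2
    have h3 : (∫ ω, (ξ i ^ 2) ω ∂μ) = ∫ ω, ξ i ω * ξ i ω ∂μ := by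
      congr 1; funext ω; simp [pow_two]
    rw [h3, hmeani i] at h2
    simpa using h2.symm
  have hzero : ∀ i j, i ≠ j → ∫ ω, ξ i ω * ξ j ω ∂μ = 0 := by
    intro i j hij
    have hind : IndepFun (ξ i) (ξ j) μ := hindep.indepFun hij
    have h := hind.integral_mul_eq_mul_integral (hinti i).aestronglyMeasurable (hinti j).aestronglyMeasurable
    calc ∫ ω, ξ i ω * ξ j ω ∂μ = ∫ ω, (ξ i * ξ j) ω ∂μ := rfl
      _ = (∫ ω, ξ i ω ∂μ) * ∫ ω, ξ j ω ∂μ := h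
      _ = 0 := by rw [hmeani i, hmeani j, mul_zero]
  calc ∫ ω, (∑ i ∈ A, ξ i ω) * (∑ j ∈ B, ξ j ω) ∂μ
      = ∫ ω, ∑ i ∈ A, ∑ j ∈ B, ξ i ω * ξ j ω ∂μ := by
        congr 1; funext ω; rw [Finset.sum_mul_sum]
    _ = ∑ i ∈ A, ∑ j ∈ B, ∫ ω, ξ i ω * ξ j ω ∂μ := by
        rw [integral_finset_sum A (fun i _ =>
          integrable_finset_sum B (fun j _ => hmuli i j))]
        exact Finset.sum_congr rfl fun i _ => integral_finset_sum B (fun j _ => hmuli i j)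
    _ = ∑ i ∈ A, ∑ j ∈ B, (if i = j then σ ^ 2 else 0) := by
        refine Finset.sum_congr rfl fun i _ => Finset.sum_congr rfl fun j _ => ?_
        by_cases h : i = j
        · subst h; simp [hsq i]
        · simp [h, hzero i j h]
    _ = ∑ i ∈ A, (if i ∈ B then σ ^ 2 else 0) := by
        refine Finset.sum_congr rfl fun i _ => ?_
        exact Finset.sum_ite_eq B i (fun _ => σ ^ 2)
    _ = (A ∩ B).card * σ ^ 2 := by
        rw [Finset.sum_ite_mem, Finset.sum_const, nsmul_eq_mul]

lemma aux_k_tendsto (k : ℕ → ℕ) (hk : Tendsto (fun m => (k m : ℝ) / m) atTop (𝓝 0))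
    (u : ℝ) (hu : 0 ≤ u) :
    Tendsto (fun n : ℕ => (k ⌊(n : ℝ) * u⌋₊ : ℝ) / n) atTop (𝓝 0) := by
  rcases eq_or_lt_of_le hu with h0 | h0
  · simp only [← h0, mul_zero, Nat.floor_zero]
    exact tendsto_const_div_atTop_nhds_zero_nat _
  · have hfl : Tendsto (fun n : ℕ => ⌊(n : ℝ) * u⌋₊) atTop atTop := by
      apply tendsto_nat_floor_atTop.comp
      exact Tendsto.atTop_mul_const h0 tendsto_natCast_atTop_atTop
    have h1 : Tendsto (fun n : ℕ => (k ⌊(n : ℝ) * u⌋₊ : ℝ) / ⌊(n : ℝ) * u⌋₊) atTop (𝓝 0) :=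
      hk.comp hfl
    have h2 : Tendsto (fun n : ℕ => (⌊(n : ℝ) * u⌋₊ : ℝ) / n) atTop (𝓝 u) := by
      have := (tendsto_nat_floor_mul_div_atTop hu).comp
        (tendsto_natCast_atTop_atTop (R := ℝ))
      simpa [Function.comp_def, mul_comm] using this
    have h3 := h1.mul h2
    rw [zero_mul] at h3
    apply h3.congr'
    filter_upwards [hfl.eventually_gt_atTop 0, eventually_gt_atTop 0] with n hn hn0
    have hfn : (⌊(n : ℝ) * u⌋₊ : ℝ) ≠ 0 := by positivity
    have hnn : (n : ℝ) ≠ 0 := by positivity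
    field_simp

end Aux

theorem deleting_item_covariance_tendsto_min
    {Ω : Type*} [MeasurableSpace Ω] (μ : Measure Ω) [IsProbabilityMeasure μ]
    (ξ : ℕ → Ω → ℝ) (σ : ℝ) (hσ : 0 < σ)
    (hmeas : ∀ i, Measurable (ξ i))
    (hindep : iIndepFun ξ μ)
    (hident : ∀ i, IdentDistrib (ξ i) (ξ 0) μ μ)
    (hL2 : MemLp (ξ 0) 2 μ)
    (hmean : ∫ ω, ξ 0 ω ∂μ = 0)
    (hvar : variance (ξ 0) μ = σ ^ 2)
    (s t : ℝ) (hs : s ∈ Set.Icc (0 : ℝ) 1) (ht : t ∈ Set.Icc (0 : ℝ) 1)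
    (k : ℕ → ℕ) (hk : Tendsto (fun m => (k m : ℝ) / m) atTop (𝓝 0))
    (J : ℕ → Finset ℕ) (hJ : ∀ m, J m ⊆ Finset.range m)
    (hJcard : ∀ m, (J m).card = k m)
    (W : ℕ → ℝ → Ω → ℝ)
    (hW : ∀ n u ω, W n u ω = (σ * Real.sqrt n)⁻¹ *
        ∑ i ∈ Finset.range ⌊(n : ℝ) * u⌋₊ \ J ⌊(n : ℝ) * u⌋₊, ξ i ω) :
    Tendsto (fun (n : ℕ) => cov μ (W n s) (W n t)) atTop (𝓝 (min s t)) := by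
  have hL2i : ∀ i, MemLp (ξ i) 2 μ := fun i => (hident i).symm.memLp_snd hL2
  have hinti : ∀ i, Integrable (ξ i) μ := fun i => (hL2i i).integrable one_le_two
  have hmeani : ∀ i, ∫ ω, ξ i ω ∂μ = 0 := fun i => (hident i).integral_eq.trans hmean
  set A : ℕ → Finset ℕ := fun n => Finset.range ⌊(n : ℝ) * s⌋₊ \ J ⌊(n : ℝ) * s⌋₊ with hA
  set B : ℕ → Finset ℕ := fun n => Finset.range ⌊(n : ℝ) * t⌋₊ \ J ⌊(n : ℝ) * t⌋₊ with hB
  -- mean of W is zero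
  have hWmean : ∀ n : ℕ, ∀ u : ℝ, (∫ ω, W n u ω ∂μ) = 0 := by
    intro n u
    have h : (fun ω => W n u ω) = fun ω => (σ * Real.sqrt n)⁻¹ *
        ∑ i ∈ Finset.range ⌊(n : ℝ) * u⌋₊ \ J ⌊(n : ℝ) * u⌋₊, ξ i ω := by
      funext ω; exact hW n u ω
    rw [h, integral_const_mul, integral_finset_sum _ (fun i _ => hinti i)]
    simp [hmeani]
  -- covariance formula
  have hcov : ∀ n : ℕ, 1 ≤ n →
      cov μ (W n s) (W n t) = ((A n ∩ B n).card : ℝ) / n := by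
    intro n hn
    have hn0 : (0:ℝ) < n := by exact_mod_cast hn
    unfold cov
    rw [hWmean n s, hWmean n t]
    have heq : (fun ω => (W n s ω - 0) * (W n t ω - 0)) =
        fun ω => ((σ * Real.sqrt n)⁻¹ * (σ * Real.sqrt n)⁻¹) *
          ((∑ i ∈ A n, ξ i ω) * (∑ j ∈ B n, ξ j ω)) := by
      funext ω; rw [sub_zero, sub_zero, hW, hW]; ring
    rw [heq, integral_const_mul,
      aux_integral_sum_mul_sum ξ σ hindep hident hL2 hmean hvar (A n) (B n)]
    have h2 : (σ * Real.sqrt n) * (σ * Real.sqrt n) = σ ^ 2 * n := by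
      have hms := Real.mul_self_sqrt hn0.le
      calc (σ * Real.sqrt n) * (σ * Real.sqrt n)
          = σ ^ 2 * (Real.sqrt n * Real.sqrt n) := by ring
        _ = σ ^ 2 * n := by rw [hms]
    rw [← mul_inv, h2]
    have hσ2 : σ ^ 2 ≠ 0 := by positivity
    have hnne : (n : ℝ) ≠ 0 := hn0.ne'
    field_simp
  -- bounds on the cardinality
  have hupper : ∀ n : ℕ, ((A n ∩ B n).card : ℝ) ≤
      min ((⌊(n : ℝ) * s⌋₊ : ℝ)) ((⌊(n : ℝ) * t⌋₊ : ℝ)) := by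
    intro n
    have h1 : (A n ∩ B n).card ≤ ⌊(n : ℝ) * s⌋₊ := by
      calc (A n ∩ B n).card ≤ (A n).card :=
            Finset.card_le_card Finset.inter_subset_left
        _ ≤ (Finset.range ⌊(n : ℝ) * s⌋₊).card :=
            Finset.card_le_card Finset.sdiff_subset
        _ = ⌊(n : ℝ) * s⌋₊ := Finset.card_range _
    have h2 : (A n ∩ B n).card ≤ ⌊(n : ℝ) * t⌋₊ := by
      calc (A n ∩ B n).card ≤ (B n).card :=
            Finset.card_le_card Finset.inter_subset_right
        _ ≤ (Finset.range ⌊(n : ℝ) * t⌋₊).card :=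
            Finset.card_le_card Finset.sdiff_subset
        _ = ⌊(n : ℝ) * t⌋₊ := Finset.card_range _
    rw [le_min_iff]
    exact ⟨by exact_mod_cast h1, by exact_mod_cast h2⟩
  have hlower : ∀ n : ℕ,
      min ((⌊(n : ℝ) * s⌋₊ : ℝ)) ((⌊(n : ℝ) * t⌋₊ : ℝ))
        - (k ⌊(n : ℝ) * s⌋₊ : ℝ) - (k ⌊(n : ℝ) * t⌋₊ : ℝ)
      ≤ ((A n ∩ B n).card : ℝ) := by
    intro n
    set m := min ⌊(n : ℝ) * s⌋₊ ⌊(n : ℝ) * t⌋₊ with hm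
    have hsub : Finset.range m \ (J ⌊(n : ℝ) * s⌋₊ ∪ J ⌊(n : ℝ) * t⌋₊) ⊆ A n ∩ B n := by
      intro i hi
      simp only [Finset.mem_sdiff, Finset.mem_range, Finset.mem_union, not_or] at hi
      obtain ⟨him, h1, h2⟩ := hi
      simp only [hA, hB, Finset.mem_inter, Finset.mem_sdiff, Finset.mem_range]
      exact ⟨⟨lt_of_lt_of_le him (min_le_left _ _), h1⟩,
        ⟨lt_of_lt_of_le him (min_le_right _ _), h2⟩⟩
    have hcard : m ≤ (A n ∩ B n).card + (k ⌊(n : ℝ) * s⌋₊ + k ⌊(n : ℝ) * t⌋₊) := by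
      calc m = (Finset.range m).card := (Finset.card_range m).symm
        _ ≤ (Finset.range m \ (J ⌊(n : ℝ) * s⌋₊ ∪ J ⌊(n : ℝ) * t⌋₊)).card
              + (J ⌊(n : ℝ) * s⌋₊ ∪ J ⌊(n : ℝ) * t⌋₊).card :=
            Finset.card_le_card_sdiff_add_card
        _ ≤ (A n ∩ B n).card + (k ⌊(n : ℝ) * s⌋₊ + k ⌊(n : ℝ) * t⌋₊) := by
            refine Nat.add_le_add (Finset.card_le_card hsub) ?_
            calc (J ⌊(n : ℝ) * s⌋₊ ∪ J ⌊(n : ℝ) * t⌋₊).card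
                ≤ (J ⌊(n : ℝ) * s⌋₊).card + (J ⌊(n : ℝ) * t⌋₊).card :=
                  Finset.card_union_le _ _
              _ = k ⌊(n : ℝ) * s⌋₊ + k ⌊(n : ℝ) * t⌋₊ := by rw [hJcard, hJcard]
    have hmcast : (m : ℝ) = min ((⌊(n : ℝ) * s⌋₊ : ℝ)) ((⌊(n : ℝ) * t⌋₊ : ℝ)) := by
      simp [hm, Nat.cast_min]
    have hc := (Nat.cast_le (α := ℝ)).2 hcard
    push_cast at hc
    rw [hmcast] at hc
    linarith
  -- limits of the bounds
  have hfloors : Tendsto (fun n : ℕ => (⌊(n : ℝ) * s⌋₊ : ℝ) / n) atTop (𝓝 s) := by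
    have := (tendsto_nat_floor_mul_div_atTop hs.1).comp (tendsto_natCast_atTop_atTop (R := ℝ))
    simpa [Function.comp_def, mul_comm] using this
  have hfloort : Tendsto (fun n : ℕ => (⌊(n : ℝ) * t⌋₊ : ℝ) / n) atTop (𝓝 t) := by
    have := (tendsto_nat_floor_mul_div_atTop ht.1).comp (tendsto_natCast_atTop_atTop (R := ℝ))
    simpa [Function.comp_def, mul_comm] using this
  have hmintend : Tendsto (fun n : ℕ =>
      min ((⌊(n : ℝ) * s⌋₊ : ℝ) / n) ((⌊(n : ℝ) * t⌋₊ : ℝ) / n)) atTop (𝓝 (min s t)) :=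
    hfloors.min hfloort
  have hks := aux_k_tendsto k hk s hs.1
  have hkt := aux_k_tendsto k hk t ht.1
  have hlow : Tendsto (fun n : ℕ =>
      min ((⌊(n : ℝ) * s⌋₊ : ℝ) / n) ((⌊(n : ℝ) * t⌋₊ : ℝ) / n)
        - (k ⌊(n : ℝ) * s⌋₊ : ℝ) / n - (k ⌊(n : ℝ) * t⌋₊ : ℝ) / n) atTop (𝓝 (min s t)) := by
    have := (hmintend.sub hks).sub hkt
    simpa using this
  -- squeeze
  have hsqueeze : Tendsto (fun n : ℕ => ((A n ∩ B n).card : ℝ) / n) atTop (𝓝 (min s t)) := by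
    apply tendsto_of_tendsto_of_tendsto_of_le_of_le' hlow hmintend
    · filter_upwards [eventually_gt_atTop 0] with n hn
      have hn0 : (0:ℝ) < n := by exact_mod_cast hn
      have hmd : min ((⌊(n : ℝ) * s⌋₊ : ℝ) / n) ((⌊(n : ℝ) * t⌋₊ : ℝ) / n)
          = min ((⌊(n : ℝ) * s⌋₊ : ℝ)) ((⌊(n : ℝ) * t⌋₊ : ℝ)) / n :=
        min_div_div_right hn0.le _ _
      rw [hmd, div_sub_div_same, div_sub_div_same]
      gcongr
      exact hlower n
    · filter_upwards [eventually_gt_atTop 0] with n hn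
      have hn0 : (0:ℝ) < n := by exact_mod_cast hn
      have hmd : min ((⌊(n : ℝ) * s⌋₊ : ℝ) / n) ((⌊(n : ℝ) * t⌋₊ : ℝ) / n)
          = min ((⌊(n : ℝ) * s⌋₊ : ℝ)) ((⌊(n : ℝ) * t⌋₊ : ℝ)) / n :=
        min_div_div_right hn0.le _ _
      rw [hmd]
      gcongr
      exact hupper n
  apply hsqueeze.congr'
  filter_upwards [eventually_ge_atTop 1] with n hn
  exact (hcov n hn).symm
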